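/- Let E_z(x) and F_z(y) be positive semidefinite matrices (indexed by z ∈ {−1,1}^c) satisfying Σ_z E_z(x) ⊗ F_z(y) = I for all x, y ∈ {−1,1}ⁿ. Fix indices i ≠ j. Define e_z[i,j] = E_x[|E_z(x)[i,j]|], f_z[i,j] = E_y[|F_z(y)[i,j]|], and e_z[i,i] = E_x[E_z(x)[i,i]], f_z[i,i] = E_y[F_z(y)[i,i]]. Then Σ_z e_z[i,j]·f_z[i,j] ≤ 1. -/

import Mathlib

open Kronecker

lemma psd_diag_nonneg {N : ℕ} {M : Matrix (Fin N) (Fin N) ℝ} (hM : M.PosSemidef)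
    (i : Fin N) : 0 ≤ M i i := by
  have := hM.dotProduct_mulVec_nonneg (Pi.single i 1)
  simpa [dotProduct, Matrix.mulVec, Pi.single_apply] using this

lemma psd_sq_le {N : ℕ} {M : Matrix (Fin N) (Fin N) ℝ} (hM : M.PosSemidef)
    (i j : Fin N) : M i j ^ 2 ≤ M i i * M j j := by
  have hsymm : M j i = M i j := by
    have := hM.1.apply i j
    simpa using this
  have key : ∀ t : ℝ, 0 ≤ M i i * (t * t) + (2 * M i j) * t + M j j := by
    intro t
    set v : Fin N → ℝ := fun k => t * (if k = i then 1 else 0) + (if k = j then 1 else 0)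
      with hvdef
    have h := hM.dotProduct_mulVec_nonneg v
    have hv : dotProduct (star v) (M.mulVec v) = M i i * (t * t) + (2 * M i j) * t + M j j := by
      simp only [hvdef, dotProduct, Matrix.mulVec, star_trivial, Pi.star_apply,
        mul_add, add_mul, mul_ite, ite_mul, mul_one, mul_zero, zero_mul, one_mul,
        Finset.sum_add_distrib, Finset.sum_ite_eq', Finset.mem_univ, if_true,
        Finset.mul_sum, Finset.sum_ite_eq]
      ring_nf
      rw [hsymm]
      ring
    rw [hv] at h
    exact h
  have := discrim_le_zero key
  rw [discrim] at this
  nlinarith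

lemma amgm_aux {x a b : ℝ} (hx : 0 ≤ x) (ha : 0 ≤ a) (hb : 0 ≤ b)
    (h : x ^ 2 ≤ a * b) : x ≤ (a + b) / 2 := by
  nlinarith [sq_nonneg (a - b), sq_nonneg (x - (a + b) / 2)]

/-- If `{E_z(x) ⊗ F_z(y)}_z` is a POVM (PSD and summing to the identity) for all
inputs `x, y`, then for fixed `i ≠ j`,
`∑_z E_x[|E_z(x)[i,j]|] ⬝ E_y[|F_z(y)[i,j]|] ≤ 1`. -/
theorem povm_offdiag_sum_le_one (c n N : ℕ)
    (E F : (Fin c → Bool) → (Fin n → Bool) → Matrix (Fin N) (Fin N) ℝ)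
    (hE : ∀ z x, (E z x).PosSemidef) (hF : ∀ z y, (F z y).PosSemidef)
    (hsum : ∀ x y, ∑ z, (E z x ⊗ₖ F z y) = 1)
    (i j : Fin N) (hij : i ≠ j) :
    ∑ z, ((∑ x, |E z x i j|) / 2 ^ n) * ((∑ y, |F z y i j|) / 2 ^ n) ≤ 1 := by
  -- diagonal identity
  have dsum : ∀ (x y : Fin n → Bool) (k : Fin N),
      ∑ z, E z x k k * F z y k k = 1 := by
    intro x y k
    have h := congrFun (congrFun (hsum x y) (k, k)) (k, k)
    simpa [Matrix.sum_apply, Matrix.one_apply] using h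
  -- pointwise bound
  have pw : ∀ (z : Fin c → Bool) (x y : Fin n → Bool),
      |E z x i j| * |F z y i j| ≤
        (E z x i i * F z y i i + E z x j j * F z y j j) / 2 := by
    intro z x y
    apply amgm_aux (mul_nonneg (abs_nonneg _) (abs_nonneg _))
      (mul_nonneg (psd_diag_nonneg (hE z x) i) (psd_diag_nonneg (hF z y) i))
      (mul_nonneg (psd_diag_nonneg (hE z x) j) (psd_diag_nonneg (hF z y) j))
    have h1 := psd_sq_le (hE z x) i j
    have h2 := psd_sq_le (hF z y) i j
    have h2' : 0 ≤ F z y i j ^ 2 := sq_nonneg _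
    calc (|E z x i j| * |F z y i j|) ^ 2
        = E z x i j ^ 2 * F z y i j ^ 2 := by rw [mul_pow, sq_abs, sq_abs]
      _ ≤ (E z x i i * F z y i i) * (E z x j j * F z y j j) := by nlinarith
  -- rewrite and bound
  have inner : ∀ (x y : Fin n → Bool),
      ∑ z, |E z x i j| * |F z y i j| ≤ 1 := by
    intro x y
    calc ∑ z, |E z x i j| * |F z y i j|
        ≤ ∑ z, (E z x i i * F z y i i + E z x j j * F z y j j) / 2 :=
          Finset.sum_le_sum fun z _ => pw z x y
      _ = ((∑ z, E z x i i * F z y i i) + ∑ z, E z x j j * F z y j j) / 2 := by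
          rw [← Finset.sum_div, Finset.sum_add_distrib]
      _ = 1 := by rw [dsum x y i, dsum x y j]; norm_num
  have hpos : (0:ℝ) < 2 ^ n * 2 ^ n := by positivity
  calc ∑ z, ((∑ x, |E z x i j|) / 2 ^ n) * ((∑ y, |F z y i j|) / 2 ^ n)
      = ∑ z, (∑ x, ∑ y, |E z x i j| * |F z y i j|) / ((2:ℝ) ^ n * 2 ^ n) := by
        refine Finset.sum_congr rfl fun z _ => ?_
        rw [div_mul_div_comm, Finset.sum_mul_sum]
    _ = (∑ z, ∑ x, ∑ y, |E z x i j| * |F z y i j|) / ((2:ℝ) ^ n * 2 ^ n) := by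
        rw [Finset.sum_div]
    _ = (∑ x, ∑ y, ∑ z, |E z x i j| * |F z y i j|) / ((2:ℝ) ^ n * 2 ^ n) := by
        congr 1
        rw [Finset.sum_comm]
        exact Finset.sum_congr rfl fun x _ => Finset.sum_comm
    _ ≤ ((2:ℝ) ^ n * 2 ^ n) / ((2:ℝ) ^ n * 2 ^ n) := by
        gcongr
        calc ∑ x, ∑ y, ∑ z, |E z x i j| * |F z y i j|
            ≤ ∑ _x : Fin n → Bool, ∑ _y : Fin n → Bool, (1:ℝ) :=
              Finset.sum_le_sum fun x _ => Finset.sum_le_sum fun y _ => inner x y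
          _ = (2:ℝ) ^ n * 2 ^ n := by
              simp [Finset.sum_const, Finset.card_univ]
    _ = 1 := div_self (ne_of_gt hpos)
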